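/- Let (R, 𝔪, k) be a commutative noetherian local ring and t ≥ 2. If the canonical projection ρ_t : R → R/𝔪^t is small, then ρ_j : R → R/𝔪^j is small for all j ≥ t. -/

import Mathlib

open CategoryTheory CategoryTheory.MonoidalCategory CategoryTheory.Abelian
open IsLocalRing PowerSeries TensorProduct HomologicalComplex

noncomputable section

set_option maxHeartbeats 1000000

/-- The length of a module, as a natural number: the Krull dimension of its lattice of
submodules.  For a finite length module this is the usual length; for a module annihilated
by the maximal ideal of a local ring it is the dimension over the residue field. -/
def lengthNat (R : Type) [CommRing R] (M : Type) [AddCommGroup M] [Module R M] : ℕ :=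
  ((Order.krullDim (Submodule R M)).unbotD 0).toNat

/-- The residue field of a local ring, as an object of its module category. -/
def resFld (R : Type) [CommRing R] [IsLocalRing R] : ModuleCat R :=
  ModuleCat.of R (IsLocalRing.ResidueField R)

/-- The `i`-th Tor module `Tor_i^R(M, N)`. -/
def TorM (R : Type) [CommRing R] (i : ℕ) (M N : ModuleCat R) : ModuleCat R :=
  ((CategoryTheory.Tor (ModuleCat R) i).obj M).obj N

/-- The map `Tor_i^R(f, N) : Tor_i^R(M, N) → Tor_i^R(M', N)` induced in the first variable
by `f : M → M'`. -/
def TorMap (R : Type) [CommRing R] (i : ℕ) {M M' : ModuleCat R} (f : M ⟶ M')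
    (N : ModuleCat R) : TorM R i M N ⟶ TorM R i M' N :=
  ((CategoryTheory.Tor (ModuleCat R) i).map f).app N

/-- The Poincaré series `P^R_M(z) = Σ_i rank_k Tor_i^R(M, k) zⁱ` of a module `M` over a
local ring `R` with residue field `k`. -/
def poincareSeries (R : Type) [CommRing R] [IsLocalRing R] (M : ModuleCat R) :
    PowerSeries ℚ :=
  PowerSeries.mk fun i => (lengthNat R (TorM R i M (resFld R)) : ℚ)

/-- `𝔪^j` as an object of the module category. -/
def mpow (R : Type) [CommRing R] [IsLocalRing R] (j : ℕ) : ModuleCat R :=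
  ModuleCat.of R ↥(maximalIdeal R ^ j)

/-- `ν_j : 𝔪^j → 𝔪^(j-1)`, the canonical inclusion. -/
def nu (R : Type) [CommRing R] [IsLocalRing R] (j : ℕ) : mpow R j ⟶ mpow R (j - 1) :=
  ModuleCat.ofHom (Submodule.inclusion (Ideal.pow_le_pow_right (Nat.sub_le j 1)))

/-- `R/𝔪^j` as an object of the module category. -/
def rmod (R : Type) [CommRing R] [IsLocalRing R] (j : ℕ) : ModuleCat R :=
  ModuleCat.of R (R ⧸ maximalIdeal R ^ j)

/-- `ρ_j : R → R/𝔪^j`, the canonical projection. -/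
def rho (R : Type) [CommRing R] [IsLocalRing R] (j : ℕ) : R →+* R ⧸ (maximalIdeal R ^ j) :=
  Ideal.Quotient.mk (maximalIdeal R ^ j)

/-- A quotient of a local ring by an ideal contained in the maximal ideal is local. -/
lemma isLocalRing_quotient (R : Type) [CommRing R] [IsLocalRing R] {I : Ideal R}
    (hI : I ≤ maximalIdeal R) : IsLocalRing (R ⧸ I) := by
  haveI : Nontrivial (R ⧸ I) := Ideal.Quotient.nontrivial_iff.mpr
    (fun h => (maximalIdeal.isMaximal R).ne_top (top_le_iff.mp (h ▸ hI)))
  exact IsLocalRing.of_surjective' (Ideal.Quotient.mk I) Ideal.Quotient.mk_surjective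

/-- `R/𝔪^j` is a local ring for `j ≥ 1`. -/
lemma isLocalRing_rmod (R : Type) [CommRing R] [IsLocalRing R] {j : ℕ} (hj : 1 ≤ j) :
    IsLocalRing (R ⧸ maximalIdeal R ^ j) :=
  isLocalRing_quotient R (Ideal.pow_le_self (by omega))

/-- The canonical projection `R/𝔪^j → R/𝔪^(j-1)` as a map of `R`-modules. -/
def etaBar (R : Type) [CommRing R] [IsLocalRing R] (j : ℕ) : rmod R j ⟶ rmod R (j - 1) :=
  ModuleCat.ofHom (Submodule.mapQ _ _ LinearMap.id
    (le_trans (Ideal.pow_le_pow_right (Nat.sub_le j 1)) (le_of_eq (Submodule.comap_id _).symm)))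

/-- `R/𝔪^i` as a module over `R/𝔪^j` (for `i ≤ j`), via the canonical projection. -/
def rmodOver (R : Type) [CommRing R] [IsLocalRing R] (i j : ℕ) (h : i ≤ j) :
    ModuleCat (R ⧸ maximalIdeal R ^ j) :=
  (ModuleCat.restrictScalars
    (Ideal.Quotient.factor (Ideal.pow_le_pow_right h))).obj
      (ModuleCat.of (R ⧸ maximalIdeal R ^ i) (R ⧸ maximalIdeal R ^ i))

instance restrictScalarsAdditive {R S : Type} [CommRing R] [CommRing S] (φ : R →+* S) :
    (ModuleCat.restrictScalars φ).Additive where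
  map_add := by intros; rfl

/-- The canonical `R`-linear map `M ⊗_R Y → M ⊗_S Y` for `S`-modules `M`, `Y`
regarded as `R`-modules via `φ : R → S`. -/
def tensorCompareApp {R S : Type} [CommRing R] [CommRing S] (φ : R →+* S)
    (M Y : ModuleCat S) :
    ((tensoringLeft (ModuleCat R)).obj ((ModuleCat.restrictScalars φ).obj M)).obj
        ((ModuleCat.restrictScalars φ).obj Y) ⟶
      (ModuleCat.restrictScalars φ).obj (((tensoringLeft (ModuleCat S)).obj M).obj Y) :=
  letI : Module R M := Module.compHom _ φ
  letI : Module R Y := Module.compHom _ φ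
  letI : Module R (((tensoringLeft (ModuleCat S)).obj M).obj Y) := Module.compHom _ φ
  ModuleCat.ofHom <| TensorProduct.lift
    (LinearMap.mk₂ R (fun (m : M) (y : Y) => (m ⊗ₜ[S] y :
        (((tensoringLeft (ModuleCat S)).obj M).obj Y)))
      (fun m₁ m₂ y => TensorProduct.add_tmul m₁ m₂ y)
      (fun r m y => (TensorProduct.smul_tmul' (R := S) (φ r) (m : M) (y : Y)).symm)
      (fun m y₁ y₂ => TensorProduct.tmul_add m y₁ y₂)
      (fun r m y => by
        show m ⊗ₜ[S] (φ r • y) = φ r • (m ⊗ₜ[S] y)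
        rw [TensorProduct.tmul_smul]))

/-- The comparison `M ⊗_R (-) ⟶ M ⊗_S (-)` as a natural transformation. -/
def tensorCompare {R S : Type} [CommRing R] [CommRing S] (φ : R →+* S) (M : ModuleCat S) :
    (ModuleCat.restrictScalars φ ⋙
        (tensoringLeft (ModuleCat R)).obj ((ModuleCat.restrictScalars φ).obj M)) ⟶
      ((tensoringLeft (ModuleCat S)).obj M ⋙ ModuleCat.restrictScalars φ) where
  app Y := tensorCompareApp φ M Y
  naturality Y Y' f := by
    apply ModuleCat.hom_ext
    apply TensorProduct.ext'
    intro m y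
    rfl

/-- Given a ring homomorphism `φ : R → S`, `S`-modules `M`, `N`, a projective resolution
`P` of `N` over `R`, a projective resolution `Q` of `N` over `S`, and a chain map
`g : P → Q` lifting the identity of `N` (over the restriction of scalars), this says that
the induced map `H_i(M ⊗_R P) → H_i(M ⊗_S Q)`, i.e. the change of rings map
`Tor_i^φ(M,N) : Tor_i^R(M,N) → Tor_i^S(M,N)`, is a monomorphism.  Such lifts `g` always
exist and are unique up to homotopy, so this is exactly the usual condition that
`Tor_i^φ(M,N)` is injective. -/
def TorComparisonMono {R S : Type} [CommRing R] [CommRing S] (φ : R →+* S)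
    (M N : ModuleCat S) (i : ℕ) : Prop :=
  ∀ (P : ProjectiveResolution ((ModuleCat.restrictScalars φ).obj N))
    (Q : ProjectiveResolution N)
    (g : P.complex ⟶
      ((ModuleCat.restrictScalars φ).mapHomologicalComplex (ComplexShape.down ℕ)).obj
        Q.complex),
    g ≫ ((ModuleCat.restrictScalars φ).mapHomologicalComplex _).map Q.π ≫
        (HomologicalComplex.singleMapHomologicalComplex (ModuleCat.restrictScalars φ)
          (ComplexShape.down ℕ) 0).hom.app N = P.π →
    Mono (HomologicalComplex.homologyMap
      ((((tensoringLeft (ModuleCat R)).obj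
            ((ModuleCat.restrictScalars φ).obj M)).mapHomologicalComplex
          (ComplexShape.down ℕ)).map g ≫
        (NatTrans.mapHomologicalComplex (tensorCompare φ M) (ComplexShape.down ℕ)).app
          Q.complex) i)

/-- A surjective local homomorphism `φ : R → S` is small if the change of rings map
`Tor_i^φ(k,k) : Tor_i^R(k,k) → Tor_i^S(k,k)` is injective for all `i`. -/
def IsSmallHom {R S : Type} [CommRing R] [CommRing S] [IsLocalRing R] [IsLocalRing S]
    (φ : R →+* S) : Prop :=
  ∀ i : ℕ, TorComparisonMono φ (ModuleCat.of S (IsLocalRing.ResidueField S))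
    (ModuleCat.of S (IsLocalRing.ResidueField S)) i


section AuxLemmas

variable {C : Type*} [Category C] [Abelian C]

lemma myYd_comp_pi {X' : C} (Y : ChainComplex C ℕ)
    (piY : Y ⟶ (ChainComplex.single₀ C).obj X') : Y.d 1 0 ≫ piY.f 0 = 0 := by
  rw [← piY.comm 1 0]
  simp
  exact Limits.comp_zero

/-- Comparison theorem: a chain complex of projectives maps to any "resolution-like"
complex. -/
def liftGen {X X' : C} (f : X ⟶ X') (P : ProjectiveResolution X)
    (Y : ChainComplex C ℕ) (piY : Y ⟶ (ChainComplex.single₀ C).obj X')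
    (hepi : Epi (piY.f 0))
    (h0 : (ShortComplex.mk (Y.d 1 0) (piY.f 0) (myYd_comp_pi Y piY)).Exact)
    (hsucc : ∀ n : ℕ, (ShortComplex.mk (Y.d (n+2) (n+1)) (Y.d (n+1) n)
      (Y.d_comp_d _ _ _)).Exact) :
    {g : P.complex ⟶ Y // g ≫ piY = P.π ≫ (ChainComplex.single₀ C).map f} := by
  let gZero : P.complex.X 0 ⟶ Y.X 0 :=
    Projective.factorThru (P.π.f 0 ≫ ((ChainComplex.single₀ C).map f).f 0) (piY.f 0)
  have hgZero : gZero ≫ piY.f 0 = P.π.f 0 ≫ ((ChainComplex.single₀ C).map f).f 0 :=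
    Projective.factorThru_comp _ _
  let gOne : P.complex.X 1 ⟶ Y.X 1 :=
    h0.liftFromProjective (P.complex.d 1 0 ≫ gZero) (by
      rw [Category.assoc, hgZero, ← Category.assoc, P.complex_d_comp_π_f_zero, Limits.zero_comp])
  have hgOne : gOne ≫ Y.d 1 0 = P.complex.d 1 0 ≫ gZero :=
    h0.liftFromProjective_comp _ _
  refine ⟨ChainComplex.mkHom _ _ gZero gOne hgOne (fun n ⟨g₁, g₂, w⟩ =>
    ⟨(hsucc n).liftFromProjective (P.complex.d (n+2) (n+1) ≫ g₂) (by
      rw [Category.assoc, w, ← Category.assoc, P.complex.d_comp_d, Limits.zero_comp]),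
     (hsucc n).liftFromProjective_comp _ _⟩), ?_⟩
  ext
  simpa using hgZero

end AuxLemmas

lemma singleMap_comp_app {ι : Type*} {C₁ C₂ C₃ : Type*} [Category C₁] [Category C₂] [Category C₃]
    [Limits.HasZeroMorphisms C₁] [Limits.HasZeroMorphisms C₂] [Limits.HasZeroMorphisms C₃]
    [Limits.HasZeroObject C₁] [Limits.HasZeroObject C₂] [Limits.HasZeroObject C₃]
    (c : ComplexShape ι) [DecidableEq ι]
    (F : C₁ ⥤ C₂) (G : C₂ ⥤ C₃) [F.PreservesZeroMorphisms] [G.PreservesZeroMorphisms]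
    (j : ι) (X : C₁) :
    (singleMapHomologicalComplex (F ⋙ G) c j).hom.app X =
      (G.mapHomologicalComplex c).map ((singleMapHomologicalComplex F c j).hom.app X) ≫
        (singleMapHomologicalComplex G c j).hom.app (F.obj X) := by
  ext i
  by_cases h : i = j
  · subst h
    simp [Functor.comp_map]
    have key : ∀ {A B D : C₂} {E : C₃} (a : A ⟶ B) (e : D ≅ B) (x : G.obj B ⟶ E),
        G.map a ≫ x = G.map (a ≫ e.inv) ≫ G.map e.hom ≫ x := by
      intros
      simp [← Functor.map_comp_assoc]
    exact key _ _ _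
  · exact (HomologicalComplex.isZero_single_obj_X c j _ i h).eq_of_tgt _ _

/-- 2.2(3).  If `ρ_t : R → R/𝔪^t` is small (`t ≥ 2`), then
`ρ_j : R → R/𝔪^j` is small for all `j ≥ t`. -/
theorem statement6 (R : Type) [CommRing R] [IsLocalRing R] [IsNoetherianRing R]
    (t : ℕ) (ht : 2 ≤ t)
    (hsmall : letI := isLocalRing_rmod R (show 1 ≤ t by omega); IsSmallHom (rho R t)) :
    ∀ j, ∀ _ : t ≤ j, letI := isLocalRing_rmod R (show 1 ≤ j by omega)
      IsSmallHom (rho R j) := by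
  intro j hj
  letI instSj : IsLocalRing (R ⧸ maximalIdeal R ^ j) := isLocalRing_rmod R (show 1 ≤ j by omega)
  letI instSt : IsLocalRing (R ⧸ maximalIdeal R ^ t) := isLocalRing_rmod R (show 1 ≤ t by omega)
  intro i P Q g hg
  -- the intermediate quotient map
  let η : (R ⧸ maximalIdeal R ^ j) →+* (R ⧸ maximalIdeal R ^ t) :=
    Ideal.Quotient.factor (Ideal.pow_le_pow_right hj)
  have hηsurj : Function.Surjective η := by
    intro y
    obtain ⟨r, rfl⟩ := Ideal.Quotient.mk_surjective y
    exact ⟨Ideal.Quotient.mk _ r, rfl⟩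
  haveI : IsLocalHom η := IsLocalHom.of_surjective η hηsurj
  let kj : ModuleCat (R ⧸ maximalIdeal R ^ j) :=
    ModuleCat.of _ (IsLocalRing.ResidueField (R ⧸ maximalIdeal R ^ j))
  let kt : ModuleCat (R ⧸ maximalIdeal R ^ t) :=
    ModuleCat.of _ (IsLocalRing.ResidueField (R ⧸ maximalIdeal R ^ t))
  -- the induced map of residue fields, as an `Sj`-linear map
  let ε' : kj ⟶ (ModuleCat.restrictScalars η).obj kt :=
    ModuleCat.ofHom (X := kj) (Y := (ModuleCat.restrictScalars η).obj kt) <|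
    { toFun := IsLocalRing.ResidueField.map η
      map_add' := fun a b => map_add _ a b
      map_smul' := by
        intro s x
        obtain ⟨a, rfl⟩ := Ideal.Quotient.mk_surjective x
        show IsLocalRing.ResidueField.map η (residue _ (s * a)) =
          η s • IsLocalRing.ResidueField.map η (residue _ a)
        rw [IsLocalRing.ResidueField.map_residue, IsLocalRing.ResidueField.map_residue, map_mul]
        rfl }
  have hε'bij : Function.Bijective ε' := by
    constructor
    · exact fun a b hab => RingHom.injective (IsLocalRing.ResidueField.map η) hab
    · intro y
      obtain ⟨b, rfl⟩ := Ideal.Quotient.mk_surjective y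
      obtain ⟨a, rfl⟩ := hηsurj b
      exact ⟨IsLocalRing.residue _ a, IsLocalRing.ResidueField.map_residue η a⟩
  haveI : Mono ε' := (ModuleCat.mono_iff_injective _).mpr hε'bij.1
  haveI : Epi ε' := (ModuleCat.epi_iff_surjective _).mpr hε'bij.2
  haveI : IsIso ε' := isIso_of_mono_of_epi _
  let εR : (ModuleCat.restrictScalars (rho R j)).obj kj ≅
      (ModuleCat.restrictScalars (rho R t)).obj kt :=
    (ModuleCat.restrictScalars (rho R j)).mapIso (asIso ε')
  -- a projective resolution of `kt` over `R ⧸ maximalIdeal R ^ t`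
  let Q'' : ProjectiveResolution kt := (HasProjectiveResolution.out (Z := kt)).some
  let Fj := (ModuleCat.restrictScalars (rho R j)).mapHomologicalComplex (ComplexShape.down ℕ)
  let Fη := (ModuleCat.restrictScalars η).mapHomologicalComplex (ComplexShape.down ℕ)
  let Aη := (singleMapHomologicalComplex (ModuleCat.restrictScalars η)
    (ComplexShape.down ℕ) 0).hom.app kt
  let Y := Fη.obj Q''.complex
  let piY : Y ⟶ (ChainComplex.single₀ _).obj ((ModuleCat.restrictScalars η).obj kt) :=
    Fη.map Q''.π ≫ Aη
  have hσ : Function.Bijective (Aη.f 0) := by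
    haveI : IsIso ((singleMapHomologicalComplex (ModuleCat.restrictScalars η)
        (ComplexShape.down ℕ) 0).hom) := Iso.isIso_hom _
    haveI : IsIso Aη := inferInstance
    haveI : IsIso (Aη.f 0) :=
      (HomologicalComplex.eval (ModuleCat (R ⧸ maximalIdeal R ^ j))
        (ComplexShape.down ℕ) 0).map_isIso Aη
    exact ⟨(ModuleCat.mono_iff_injective _).mp inferInstance,
      (ModuleCat.epi_iff_surjective _).mp inferInstance⟩
  have hπQ''0 : Function.Surjective (Q''.π.f 0) := (ModuleCat.epi_iff_surjective _).mp inferInstance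
  have hepi : Epi (piY.f 0) := by
    rw [ModuleCat.epi_iff_surjective]
    intro z
    obtain ⟨w, hw⟩ := hσ.2 z
    obtain ⟨x, hx⟩ := hπQ''0 w
    refine ⟨x, ?_⟩
    show Aη.f 0 (Q''.π.f 0 x) = z
    rw [hx, hw]
  have h0 : (ShortComplex.mk (Y.d 1 0) (piY.f 0) (myYd_comp_pi Y piY)).Exact := by
    rw [ShortComplex.moduleCat_exact_iff]
    intro x hx
    have hx' : Q''.π.f 0 x = 0 := by
      apply hσ.1
      exact hx.trans (map_zero (ConcreteCategory.hom (Aη.f 0))).symm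
    obtain ⟨y, hy⟩ := (ShortComplex.moduleCat_exact_iff _).mp Q''.exact₀ x hx'
    exact ⟨y, hy⟩
  have hsucc : ∀ n : ℕ, (ShortComplex.mk (Y.d (n+2) (n+1)) (Y.d (n+1) n)
      (Y.d_comp_d _ _ _)).Exact := by
    intro n
    rw [ShortComplex.moduleCat_exact_iff]
    intro x hx
    obtain ⟨y, hy⟩ := (ShortComplex.moduleCat_exact_iff _).mp (Q''.exact_succ n) x hx
    exact ⟨y, hy⟩
  obtain ⟨g', hg'⟩ := liftGen ε' Q Y piY hepi h0 hsucc
  -- the transported projective resolution of `kt` over `R`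
  haveI : IsIso εR.hom := εR.isIso_hom
  haveI : IsIso ((HomologicalComplex.single (ModuleCat R) (ComplexShape.down ℕ) 0).map εR.hom) :=
    inferInstance
  let P' : ProjectiveResolution ((ModuleCat.restrictScalars (rho R t)).obj kt) :=
    { complex := P.complex
      projective := P.projective
      π := P.π ≫ (HomologicalComplex.single (ModuleCat R) (ComplexShape.down ℕ) 0).map εR.hom
      quasiIso := inferInstance }
  let g'' : P.complex ⟶ ((ModuleCat.restrictScalars (rho R t)).mapHomologicalComplex
      (ComplexShape.down ℕ)).obj Q''.complex := g ≫ Fj.map g'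
  have hcond : g'' ≫ ((ModuleCat.restrictScalars (rho R t)).mapHomologicalComplex
      (ComplexShape.down ℕ)).map Q''.π ≫
      (singleMapHomologicalComplex (ModuleCat.restrictScalars (rho R t))
        (ComplexShape.down ℕ) 0).hom.app kt = P'.π := by
    have h1 : (singleMapHomologicalComplex (ModuleCat.restrictScalars (rho R t))
        (ComplexShape.down ℕ) 0).hom.app kt =
        Fj.map Aη ≫ (singleMapHomologicalComplex (ModuleCat.restrictScalars (rho R j))
          (ComplexShape.down ℕ) 0).hom.app ((ModuleCat.restrictScalars η).obj kt) :=
      singleMap_comp_app _ (ModuleCat.restrictScalars η) (ModuleCat.restrictScalars (rho R j)) 0 kt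
    have h2 : ((ModuleCat.restrictScalars (rho R t)).mapHomologicalComplex
        (ComplexShape.down ℕ)).map Q''.π = Fj.map (Fη.map Q''.π) := rfl
    rw [h1, h2]
    have hnat := (singleMapHomologicalComplex (ModuleCat.restrictScalars (rho R j))
      (ComplexShape.down ℕ) 0).hom.naturality ε'
    simp only [Functor.comp_map] at hnat
    calc (g ≫ Fj.map g') ≫ Fj.map (Fη.map Q''.π) ≫ Fj.map Aη ≫
          (singleMapHomologicalComplex (ModuleCat.restrictScalars (rho R j))
            (ComplexShape.down ℕ) 0).hom.app ((ModuleCat.restrictScalars η).obj kt)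
        = g ≫ Fj.map (g' ≫ piY) ≫
          (singleMapHomologicalComplex (ModuleCat.restrictScalars (rho R j))
            (ComplexShape.down ℕ) 0).hom.app ((ModuleCat.restrictScalars η).obj kt) := by
          simp only [piY, Functor.map_comp, Category.assoc]
      _ = g ≫ Fj.map (Q.π ≫ (ChainComplex.single₀ _).map ε') ≫
          (singleMapHomologicalComplex (ModuleCat.restrictScalars (rho R j))
            (ComplexShape.down ℕ) 0).hom.app ((ModuleCat.restrictScalars η).obj kt) := by
          rw [hg']
      _ = g ≫ Fj.map Q.π ≫ Fj.map ((HomologicalComplex.single _ _ 0).map ε') ≫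
          (singleMapHomologicalComplex (ModuleCat.restrictScalars (rho R j))
            (ComplexShape.down ℕ) 0).hom.app ((ModuleCat.restrictScalars η).obj kt) := by
          simp only [piY, Functor.map_comp, Category.assoc]
      _ = g ≫ Fj.map Q.π ≫
          (singleMapHomologicalComplex (ModuleCat.restrictScalars (rho R j))
            (ComplexShape.down ℕ) 0).hom.app kj ≫
          (HomologicalComplex.single (ModuleCat R) (ComplexShape.down ℕ) 0).map
            ((ModuleCat.restrictScalars (rho R j)).map ε') := by
          rw [hnat]
      _ = (g ≫ Fj.map Q.π ≫
          (singleMapHomologicalComplex (ModuleCat.restrictScalars (rho R j))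
            (ComplexShape.down ℕ) 0).hom.app kj) ≫
          (HomologicalComplex.single (ModuleCat R) (ComplexShape.down ℕ) 0).map
            ((ModuleCat.restrictScalars (rho R j)).map ε') := by
          simp only [Category.assoc]
      _ = P.π ≫ (HomologicalComplex.single (ModuleCat R) (ComplexShape.down ℕ) 0).map
            ((ModuleCat.restrictScalars (rho R j)).map ε') := by
          rw [hg]
  have hv := hsmall i P' Q'' g'' hcond
  -- the comparison isomorphism of tensored complexes
  let e := (NatIso.mapHomologicalComplex ((tensoringLeft (ModuleCat R)).mapIso εR)
    (ComplexShape.down ℕ)).app P.complex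
  let W : ((ModuleCat.restrictScalars (rho R j)).mapHomologicalComplex
        (ComplexShape.down ℕ)).obj
        ((((tensoringLeft (ModuleCat (R ⧸ maximalIdeal R ^ j))).obj kj).mapHomologicalComplex
          (ComplexShape.down ℕ)).obj Q.complex) ⟶
      ((ModuleCat.restrictScalars (rho R t)).mapHomologicalComplex (ComplexShape.down ℕ)).obj
        ((((tensoringLeft (ModuleCat (R ⧸ maximalIdeal R ^ t))).obj kt).mapHomologicalComplex
          (ComplexShape.down ℕ)).obj Q''.complex) :=
    Fj.map ((((tensoringLeft (ModuleCat (R ⧸ maximalIdeal R ^ j))).obj kj).mapHomologicalComplex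
        (ComplexShape.down ℕ)).map g' ≫
      (NatTrans.mapHomologicalComplex ((tensoringLeft _).map ε') (ComplexShape.down ℕ)).app Y ≫
      (NatTrans.mapHomologicalComplex (tensorCompare η kt) (ComplexShape.down ℕ)).app Q''.complex)
  have hE : ((((tensoringLeft (ModuleCat R)).obj
        ((ModuleCat.restrictScalars (rho R j)).obj kj)).mapHomologicalComplex
        (ComplexShape.down ℕ)).map g ≫
      (NatTrans.mapHomologicalComplex (tensorCompare (rho R j) kj) (ComplexShape.down ℕ)).app
        Q.complex) ≫ W =
      e.hom ≫ ((((tensoringLeft (ModuleCat R)).obj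
        ((ModuleCat.restrictScalars (rho R t)).obj kt)).mapHomologicalComplex
        (ComplexShape.down ℕ)).map g'' ≫
      (NatTrans.mapHomologicalComplex (tensorCompare (rho R t) kt) (ComplexShape.down ℕ)).app
        Q''.complex) := by
    apply HomologicalComplex.hom_ext
    intro n
    apply ModuleCat.hom_ext
    refine TensorProduct.ext' (fun m p => ?_)
    rfl
  have hmono : Mono (HomologicalComplex.homologyMap
      (((((tensoringLeft (ModuleCat R)).obj
        ((ModuleCat.restrictScalars (rho R j)).obj kj)).mapHomologicalComplex
        (ComplexShape.down ℕ)).map g ≫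
      (NatTrans.mapHomologicalComplex (tensorCompare (rho R j) kj) (ComplexShape.down ℕ)).app
        Q.complex) ≫ W) i) := by
    rw [hE]
    erw [HomologicalComplex.homologyMap_comp]
    haveI : IsIso e.hom := e.isIso_hom
    haveI : IsIso (HomologicalComplex.homologyMap e.hom i) := by
      have hq : QuasiIsoAt e.hom i := inferInstance
      rwa [quasiIsoAt_iff_isIso_homologyMap] at hq
    haveI := hv
    exact mono_comp' inferInstance hv
  erw [HomologicalComplex.homologyMap_comp] at hmono
  haveI := hmono
  exact @mono_of_mono _ _ _ _ _ _ (HomologicalComplex.homologyMap W i) hmono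

end
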